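/- Let 𝒥 be a finite set, K ∈ ℕ, sizes p_{t,j} ∈ ℝ for each t ∈ {1,…,K} and j ∈ 𝒥, and let x : 𝒥 × {1,…,K} → [0,1] satisfy ∑_t x_{j,t} = 1 for every j. Then there exists a map τ : 𝒥 → {1,…,K} such that for every type t and every value v, |{j ∈ 𝒥 : τ(j) = t and p_{t,j} = v}| ≥ ⌊∑_{j : p_{t,j} = v} x_{j,t}⌋. -/

import Mathlib

open Finset
open scoped Classical

/-- Rounding the fractional job-assignment variables for the Santa
Claus problem: every type receives, for each value, at least the rounded-down fractional
number of jobs of that value. -/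
theorem santa_fractional_assignment_rounding {J : Type*} [Fintype J] (K : ℕ)
    (p : Fin K → J → ℝ)
    (x : J → Fin K → ℝ)
    (hx0 : ∀ j t, 0 ≤ x j t) (hx1 : ∀ j t, x j t ≤ 1)
    (hsum : ∀ j, ∑ t, x j t = 1) :
    ∃ τ : J → Fin K,
      ∀ (t : Fin K) (v : ℝ),
        ⌊∑ j ∈ univ.filter (fun j => p t j = v), x j t⌋ ≤
          ((univ.filter fun j => τ j = t ∧ p t j = v).card : ℤ) := by
  classical
  by_cases hJ : Nonempty J
  swap
  · have hJe : IsEmpty J := not_nonempty_iff.mp hJ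
    refine ⟨fun j => (IsEmpty.false j).elim, fun t v => ?_⟩
    simp
  obtain ⟨j0⟩ := hJ
  have hK : Nonempty (Fin K) := by
    by_contra h
    have h1 := hsum j0
    haveI : IsEmpty (Fin K) := not_nonempty_iff.mp h
    rw [Finset.univ_eq_empty] at h1
    simp at h1
  obtain ⟨t0⟩ := hK
  set r : Fin K → ℝ → ℤ := fun t v => ⌊∑ j ∈ univ.filter (fun j => p t j = v), x j t⌋
    with hrdef
  have hr0 : ∀ t v, 0 ≤ r t v := fun t v =>
    Int.floor_nonneg.mpr (Finset.sum_nonneg fun j _ => hx0 j t)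
  set S : Finset (Fin K × ℝ × ℕ) :=
    univ.biUnion (fun t => ((univ : Finset J).image (p t)).biUnion
      (fun v => (Finset.range (r t v).toNat).image fun i => (t, v, i))) with hSdef
  have hS_lt : ∀ a : Fin K × ℝ × ℕ, a ∈ S → a.2.2 < (r a.1 a.2.1).toNat := by
    rintro ⟨t, v, i⟩ hmem
    rw [hSdef, mem_biUnion] at hmem
    obtain ⟨t', -, hmem⟩ := hmem
    rw [mem_biUnion] at hmem
    obtain ⟨v', -, hmem⟩ := hmem
    rw [mem_image] at hmem
    obtain ⟨i', hi', heq⟩ := hmem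
    obtain ⟨rfl, rfl, rfl⟩ := Prod.mk.injEq _ _ _ _ ▸ heq
    · exact mem_range.mp hi'
  -- Hall's condition for the bipartite graph between slots and jobs
  set nbr : {a : Fin K × ℝ × ℕ // a ∈ S} → Finset J :=
    fun s => univ.filter fun j => p s.val.1 j = s.val.2.1 with hnbrdef
  have hall : ∀ A : Finset {a : Fin K × ℝ × ℕ // a ∈ S},
      A.card ≤ (A.biUnion nbr).card := by
    intro A
    set B := A.image (fun s : {a : Fin K × ℝ × ℕ // a ∈ S} => (s.val.1, s.val.2.1)) with hB
    set N := A.biUnion nbr with hN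
    have h1 : A.card ≤ ∑ b ∈ B, (r b.1 b.2).toNat := by
      rw [Finset.card_eq_sum_card_fiberwise
        (f := fun s : {a : Fin K × ℝ × ℕ // a ∈ S} => (s.val.1, s.val.2.1)) (t := B)
        (fun s hs => Finset.mem_image_of_mem _ hs)]
      refine Finset.sum_le_sum fun b hb => ?_
      have hmem : ∀ s ∈ A.filter
          (fun s : {a : Fin K × ℝ × ℕ // a ∈ S} => (s.val.1, s.val.2.1) = b),
          s.val.2.2 ∈ Finset.range (r b.1 b.2).toNat := by
        intro s hs
        rw [mem_filter] at hs
        have hlt := hS_lt s.val s.property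
        have hb1 : s.val.1 = b.1 := congrArg Prod.fst hs.2
        have hb2 : s.val.2.1 = b.2 := congrArg Prod.snd hs.2
        rw [mem_range, ← hb1, ← hb2]
        exact hlt
      have hinj : Set.InjOn (fun s : {a : Fin K × ℝ × ℕ // a ∈ S} => s.val.2.2)
          (A.filter (fun s => (s.val.1, s.val.2.1) = b)) := by
        intro s hs s' hs' h
        rw [Finset.mem_coe, mem_filter] at hs hs'
        apply Subtype.ext
        have e := hs.2.trans hs'.2.symm
        simp only [Prod.mk.injEq] at e
        exact Prod.ext e.1 (Prod.ext e.2 h)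
      calc (A.filter (fun s => (s.val.1, s.val.2.1) = b)).card
          ≤ (Finset.range (r b.1 b.2).toNat).card :=
            Finset.card_le_card_of_injOn _ hmem hinj
        _ = (r b.1 b.2).toNat := Finset.card_range _
    have key : (∑ b ∈ B, ((r b.1 b.2).toNat : ℝ)) ≤ (N.card : ℝ) := by
      have step1 : ∀ b ∈ B, ((r b.1 b.2).toNat : ℝ) ≤
          ∑ j ∈ N.filter (fun j => p b.1 j = b.2), x j b.1 := by
        intro b hb
        obtain ⟨s, hsA, hsb⟩ := mem_image.mp hb
        have hb1 : s.val.1 = b.1 := congrArg Prod.fst hsb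
        have hb2 : s.val.2.1 = b.2 := congrArg Prod.snd hsb
        have hsub : (univ.filter fun j => p b.1 j = b.2) ⊆ N := by
          intro j hj
          refine mem_biUnion.mpr ⟨s, hsA, ?_⟩
          rw [hnbrdef]
          simp only [mem_filter, mem_univ, true_and]
          rw [hb1, hb2]
          exact (mem_filter.mp hj).2
        have heqf : univ.filter (fun j => p b.1 j = b.2) =
            N.filter (fun j => p b.1 j = b.2) := by
          ext j
          simp only [mem_filter, mem_univ, true_and]
          exact ⟨fun h => ⟨hsub (by simp [mem_filter, h]), h⟩, fun h => h.2⟩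
        have hcast : ((r b.1 b.2).toNat : ℤ) = r b.1 b.2 :=
          Int.toNat_of_nonneg (hr0 b.1 b.2)
        have hfl : ((r b.1 b.2 : ℤ) : ℝ) ≤
            ∑ j ∈ univ.filter (fun j => p b.1 j = b.2), x j b.1 := by
          simp only [hrdef]
          exact Int.floor_le _
        rw [heqf] at hfl
        calc ((r b.1 b.2).toNat : ℝ) = ((r b.1 b.2 : ℤ) : ℝ) := by exact_mod_cast hcast
          _ ≤ _ := hfl
      have step2 : ∀ j ∈ N, (∑ b ∈ B.filter (fun b => p b.1 j = b.2), x j b.1) ≤ 1 := by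
        intro j hj
        have hinj2 : ∀ b ∈ B.filter (fun b => p b.1 j = b.2),
            ∀ b' ∈ B.filter (fun b => p b.1 j = b.2), b.1 = b'.1 → b = b' := by
          intro b hb b' hb' h
          have h2 : b.2 = b'.2 := by
            rw [← (mem_filter.mp hb).2, ← (mem_filter.mp hb').2, h]
          exact Prod.ext h h2
        calc ∑ b ∈ B.filter (fun b => p b.1 j = b.2), x j b.1
            = ∑ t ∈ (B.filter (fun b => p b.1 j = b.2)).image Prod.fst, x j t :=
              (Finset.sum_image hinj2).symm
          _ ≤ ∑ t ∈ univ, x j t :=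
              Finset.sum_le_sum_of_subset_of_nonneg (Finset.subset_univ _)
                (fun t _ _ => hx0 j t)
          _ = 1 := hsum j
      calc ∑ b ∈ B, ((r b.1 b.2).toNat : ℝ)
          ≤ ∑ b ∈ B, ∑ j ∈ N.filter (fun j => p b.1 j = b.2), x j b.1 :=
            Finset.sum_le_sum step1
        _ = ∑ b ∈ B, ∑ j ∈ N, if p b.1 j = b.2 then x j b.1 else 0 := by
            exact Finset.sum_congr rfl fun b _ => Finset.sum_filter _ _
        _ = ∑ j ∈ N, ∑ b ∈ B, if p b.1 j = b.2 then x j b.1 else 0 := Finset.sum_comm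
        _ = ∑ j ∈ N, ∑ b ∈ B.filter (fun b => p b.1 j = b.2), x j b.1 := by
            exact Finset.sum_congr rfl fun j _ => (Finset.sum_filter _ _).symm
        _ ≤ ∑ j ∈ N, (1 : ℝ) := Finset.sum_le_sum step2
        _ = N.card := by simp
    have h2 : ∑ b ∈ B, (r b.1 b.2).toNat ≤ N.card := by exact_mod_cast key
    exact h1.trans h2
  obtain ⟨f, hfinj, hf⟩ :=
    (Finset.all_card_le_biUnion_card_iff_exists_injective nbr).mp hall
  set τ : J → Fin K := fun j =>
    if h : ∃ s : {a : Fin K × ℝ × ℕ // a ∈ S}, f s = j then (Classical.choose h).val.1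
    else t0 with hτdef
  refine ⟨τ, fun t v => ?_⟩
  by_cases hpos : 0 < r t v
  swap
  · have h0 : ⌊∑ j ∈ univ.filter (fun j => p t j = v), x j t⌋ ≤ 0 := by
      rw [hrdef] at hpos
      exact not_lt.mp hpos
    exact h0.trans (Int.natCast_nonneg _)
  · have hvmem : v ∈ (univ : Finset J).image (p t) := by
      by_contra hv
      have hempty : (univ.filter fun j => p t j = v) = ∅ := by
        rw [Finset.filter_eq_empty_iff]
        intro j _
        exact fun h => hv (mem_image.mpr ⟨j, mem_univ j, h⟩)
      rw [hrdef] at hpos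
      simp only [hempty, Finset.sum_empty, Int.floor_zero] at hpos
      exact lt_irrefl 0 hpos
    have hmemS : ∀ i, i < (r t v).toNat → (t, v, i) ∈ S := by
      intro i hi
      rw [hSdef]
      exact mem_biUnion.mpr ⟨t, mem_univ t, mem_biUnion.mpr
        ⟨v, hvmem, mem_image.mpr ⟨i, mem_range.mpr hi, rfl⟩⟩⟩
    have hcard : (r t v).toNat ≤ (univ.filter fun j => τ j = t ∧ p t j = v).card := by
      have hle := Finset.card_le_card_of_injOn
        (s := Finset.range (r t v).toNat)
        (t := univ.filter fun j => τ j = t ∧ p t j = v)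
        (fun i => if h : (t, v, i) ∈ S then f ⟨(t, v, i), h⟩ else j0)
        ?_ ?_
      · rwa [Finset.card_range] at hle
      · intro i hi
        rw [Finset.mem_coe, mem_range] at hi
        have hm := hmemS i hi
        simp only [dif_pos hm]
        set s : {a : Fin K × ℝ × ℕ // a ∈ S} := ⟨(t, v, i), hm⟩ with hsdef
        have hp : p t (f s) = v := by
          have := hf s
          rw [hnbrdef, mem_filter] at this
          exact this.2
        have hτ : τ (f s) = t := by
          have hex : ∃ s' : {a : Fin K × ℝ × ℕ // a ∈ S}, f s' = f s := ⟨s, rfl⟩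
          rw [hτdef]
          simp only [dif_pos hex]
          have hspec := Classical.choose_spec hex
          rw [hfinj hspec]
        exact mem_filter.mpr ⟨mem_univ _, hτ, hp⟩
      · intro i hi i' hi' hii
        rw [Finset.mem_coe, mem_range] at hi hi'
        have hm := hmemS i hi
        have hm' := hmemS i' hi'
        simp only [dif_pos hm, dif_pos hm'] at hii
        have := hfinj hii
        have := congrArg (fun a : {a : Fin K × ℝ × ℕ // a ∈ S} => a.val.2.2) this
        exact this
    have hfin : ((r t v).toNat : ℤ) ≤
        ((univ.filter fun j => τ j = t ∧ p t j = v).card : ℤ) := by exact_mod_cast hcard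
    rw [Int.toNat_of_nonneg (hr0 t v)] at hfin
    rw [hrdef] at hfin
    exact hfin
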